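/- Fix ρ ∈ E (so that N = N_ρ is an ℓ-superchampion associated to ρ), let α_p = v_p(N), and let p be a prime and γ ≥ 0 an integer. Then ben(p^γ N) = ℓ(p^{γ+α_p}) − ℓ(p^{α_p}) − ργ log p is nondecreasing in γ and tends to infinity with γ. -/

import Mathlib

/-- ℓ(M): the sum of the prime powers in the standard factorization of M. -/
def ell (M : ℕ) : ℕ := ∑ p ∈ M.primeFactors, p ^ M.factorization p

/-- The benefit of M with respect to the superchampion N associated to ρ. -/
noncomputable def ben (ρ : ℝ) (N M : ℕ) : ℝ :=
  (ell M : ℝ) - (ell N : ℝ) - ρ * (Real.log M - Real.log N)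

lemma ell_prime_pow {p : ℕ} (hp : p.Prime) {k : ℕ} (hk : k ≠ 0) :
    ell (p ^ k) = p ^ k := by
  unfold ell
  rw [Nat.primeFactors_pow _ hk, hp.primeFactors]
  simp [hp.factorization_pow]

lemma ell_one : ell 1 = 0 := by simp [ell]

lemma ell_pp_le {p : ℕ} (hp : p.Prime) (k : ℕ) : ell (p ^ k) ≤ p ^ k := by
  rcases Nat.eq_zero_or_pos k with rfl | hk
  · simp [ell]
  · rw [ell_prime_pow hp hk.ne']

lemma ell_pow_mul {p : ℕ} (hp : p.Prime) {N : ℕ} (hN : 0 < N) (γ : ℕ) :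
    ell (p ^ γ * N) + ell (p ^ N.factorization p) =
      ell N + ell (p ^ (γ + N.factorization p)) := by
  rcases Nat.eq_zero_or_pos γ with rfl | hγ
  · simp
  have hpγ : p ^ γ ≠ 0 := pow_ne_zero _ hp.pos.ne'
  have hPF : (p ^ γ * N).primeFactors = insert p N.primeFactors := by
    rw [Nat.primeFactors_mul hpγ hN.ne', Nat.primeFactors_pow _ hγ.ne', hp.primeFactors]
    rfl
  have hfac : ∀ q, (p ^ γ * N).factorization q
      = (if q = p then γ else 0) + N.factorization q := by
    intro q
    rw [Nat.factorization_mul hpγ hN.ne', hp.factorization_pow]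
    simp [Finsupp.single_apply, eq_comm]
  by_cases hpN : p ∈ N.primeFactors
  · have hins : insert p N.primeFactors = N.primeFactors := Finset.insert_eq_self.2 hpN
    have hα : N.factorization p ≠ 0 := by
      rw [← Nat.support_factorization] at hpN
      exact Finsupp.mem_support_iff.1 hpN
    have e1 : ∑ q ∈ N.primeFactors, q ^ ((p ^ γ * N).factorization q)
        = (∑ q ∈ N.primeFactors.erase p, q ^ N.factorization q)
          + p ^ (γ + N.factorization p) := by
      rw [← Finset.sum_erase_add _ _ hpN]
      congr 1
      · exact Finset.sum_congr rfl fun q hq => by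
          rw [hfac]; simp [Finset.ne_of_mem_erase hq]
      · rw [hfac]; simp
    have e2 : ∑ q ∈ N.primeFactors, q ^ N.factorization q
        = (∑ q ∈ N.primeFactors.erase p, q ^ N.factorization q)
          + p ^ N.factorization p := by
      rw [← Finset.sum_erase_add _ _ hpN]
    rw [ell_prime_pow hp hα, ell_prime_pow hp (show γ + N.factorization p ≠ 0 by omega)]
    unfold ell
    rw [hPF, hins, e1, e2]
    omega
  · have hα : N.factorization p = 0 := by
      by_contra h
      exact hpN (by rw [← Nat.support_factorization]; exact Finsupp.mem_support_iff.2 h)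
    rw [hα]
    simp only [pow_zero, Nat.add_zero]
    rw [ell_one, ell_prime_pow hp hγ.ne', Nat.add_zero]
    unfold ell
    rw [hPF, Finset.sum_insert hpN, hfac]
    simp only [if_pos rfl, hα, Nat.add_zero]
    have : ∀ q ∈ N.primeFactors, q ^ ((p ^ γ * N).factorization q) = q ^ N.factorization q := by
      intro q hq
      rw [hfac]
      have : q ≠ p := fun h => hpN (h ▸ hq)
      simp [this]
    rw [Finset.sum_congr rfl this]
    exact Nat.add_comm _ _

theorem ben_mul_pow_monotone (ρ : ℝ) (N : ℕ) (hN : 0 < N)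
    (hsc : ∀ M : ℕ, 0 < M →
      (ell N : ℝ) - ρ * Real.log N ≤ (ell M : ℝ) - ρ * Real.log M)
    (p : ℕ) (hp : p.Prime) :
    (∀ γ : ℕ, ben ρ N (p ^ γ * N) =
      (ell (p ^ (γ + N.factorization p)) : ℝ) - (ell (p ^ N.factorization p) : ℝ)
        - ρ * (γ : ℝ) * Real.log p) ∧
    Monotone (fun γ : ℕ => ben ρ N (p ^ γ * N)) ∧
    Filter.Tendsto (fun γ : ℕ => ben ρ N (p ^ γ * N)) Filter.atTop Filter.atTop := by
  set α := N.factorization p with hα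
  have hp0 : (0:ℝ) < (p:ℝ) := by exact_mod_cast hp.pos
  have hp2 : (2:ℝ) ≤ (p:ℝ) := by exact_mod_cast hp.two_le
  have hN0 : (0:ℝ) < (N:ℝ) := by exact_mod_cast hN
  -- Part 1
  have key : ∀ γ : ℕ, ben ρ N (p ^ γ * N) =
      (ell (p ^ (γ + α)) : ℝ) - (ell (p ^ α) : ℝ) - ρ * (γ : ℝ) * Real.log p := by
    intro γ
    have hlog : Real.log ((p ^ γ * N : ℕ) : ℝ) = γ * Real.log p + Real.log N := by
      push_cast
      rw [Real.log_mul (by positivity) hN0.ne', Real.log_pow]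
    have hellq := ell_pow_mul hp hN γ
    have hellr : (ell (p ^ γ * N) : ℝ) + (ell (p ^ α) : ℝ)
        = (ell N : ℝ) + (ell (p ^ (γ + α)) : ℝ) := by exact_mod_cast hellq
    unfold ben
    rw [hlog]
    ring_nf
    ring_nf at hellr
    linarith
  -- increments of ell(p^·) are monotone
  have step : ∀ a b : ℕ, a ≤ b →
      (ell (p ^ (a + 1)) : ℝ) - (ell (p ^ a) : ℝ)
        ≤ (ell (p ^ (b + 1)) : ℝ) - (ell (p ^ b) : ℝ) := by
    intro a b hab
    rcases eq_or_lt_of_le hab with rfl | hlt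
    · exact le_rfl
    · have hb1 : 1 ≤ b := by omega
      rw [ell_prime_pow hp (by omega : a + 1 ≠ 0),
        ell_prime_pow hp (by omega : b + 1 ≠ 0), ell_prime_pow hp (by omega : b ≠ 0)]
      have hab' : (p:ℝ) ^ a ≤ (p:ℝ) ^ b :=
        pow_le_pow_right₀ (by linarith) hab
      rcases Nat.eq_zero_or_pos a with rfl | ha
      · rw [pow_zero, ell_one]
        have hpb : (p:ℝ) ≤ (p:ℝ) ^ b := by
          calc (p:ℝ) = (p:ℝ) ^ 1 := (pow_one _).symm
          _ ≤ (p:ℝ) ^ b := pow_le_pow_right₀ (by linarith) hb1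
        push_cast
        have hs : (p:ℝ) ^ (b + 1) = (p:ℝ) ^ b * p := pow_succ _ _
        have h2b : (p:ℝ) ^ b * 2 ≤ (p:ℝ) ^ b * p :=
          mul_le_mul_of_nonneg_left hp2 (le_of_lt (pow_pos hp0 b))
        linarith
      · rw [ell_prime_pow hp ha.ne']
        push_cast
        rw [pow_succ, pow_succ]
        nlinarith
  -- the superchampion inequality at M = p * N
  have hben0 : ∀ M : ℕ, 0 < M → 0 ≤ ben ρ N M := by
    intro M hM
    have := hsc M hM
    unfold ben
    linarith
  have hρ : ρ * Real.log p ≤ (ell (p ^ (α + 1)) : ℝ) - (ell (p ^ α) : ℝ) := by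
    have h0 := hben0 (p ^ 1 * N) (Nat.mul_pos (pow_pos hp.pos 1) hN)
    rw [key 1] at h0
    have : (1:ℕ) + α = α + 1 := by omega
    rw [this] at h0
    push_cast at h0 ⊢
    linarith
  refine ⟨key, ?_, ?_⟩
  · -- monotone
    apply monotone_nat_of_le_succ
    intro γ
    rw [key γ, key (γ + 1)]
    have hstep := step α (γ + α) (Nat.le_add_left _ _)
    have e1 : γ + 1 + α = γ + α + 1 := by omega
    rw [e1]
    push_cast
    linarith
  · -- tendsto
    set B := |ρ * Real.log p| with hB
    have hB0 : 0 ≤ B := abs_nonneg _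
    set C := (ell (p ^ α) : ℝ) with hC
    set ε : ℝ := 1 / (2 * (B + 1)) with hε
    have hε0 : 0 < ε := by positivity
    have hsmall : Filter.Tendsto (fun γ : ℕ => (γ:ℝ) * (1/2:ℝ) ^ γ)
        Filter.atTop (nhds 0) :=
      tendsto_self_mul_const_pow_of_lt_one (by norm_num) (by norm_num)
    have hlim : Filter.Tendsto (fun γ : ℕ => (1/2:ℝ) * 2 ^ γ - C)
        Filter.atTop Filter.atTop := by
      apply Filter.tendsto_atTop_add_const_right
      exact (tendsto_pow_atTop_atTop_of_one_lt (by norm_num : (1:ℝ) < 2)).const_mul_atTop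
        (by norm_num)
    apply Filter.tendsto_atTop_mono' _ _ hlim
    filter_upwards [Filter.eventually_ge_atTop 1,
      hsmall.eventually (gt_mem_nhds hε0)] with γ hγ1 hγ2
    rw [key γ]
    have hpow2 : (0:ℝ) < 2 ^ γ := by positivity
    have hγ0 : (0:ℝ) ≤ (γ:ℝ) := Nat.cast_nonneg _
    -- γ < ε * 2^γ
    have hγε : (γ:ℝ) < ε * 2 ^ γ := by
      have := mul_lt_mul_of_pos_right hγ2 hpow2
      rwa [mul_assoc, ← mul_pow, one_div, inv_mul_cancel₀ (two_ne_zero), one_pow,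
        mul_one] at this
    have hBε : (B + 1) * ε = 1 / 2 := by
      rw [hε]
      field_simp
    have f3 : B * (γ:ℝ) ≤ (1/2) * 2 ^ γ := by
      have h1 : (B + 1) * (γ:ℝ) ≤ (B + 1) * (ε * 2 ^ γ) :=
        mul_le_mul_of_nonneg_left hγε.le (by linarith)
      rw [← mul_assoc, hBε] at h1
      nlinarith
    have f2 : ρ * (γ:ℝ) * Real.log p ≤ B * γ := by
      have := le_abs_self (ρ * Real.log p)
      nlinarith
    have f1 : (2:ℝ) ^ γ ≤ (ell (p ^ (γ + α)) : ℝ) := by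
      rw [ell_prime_pow hp (by omega : γ + α ≠ 0)]
      push_cast
      calc (2:ℝ) ^ γ ≤ (p:ℝ) ^ γ := pow_le_pow_left₀ (by norm_num) hp2 γ
        _ ≤ (p:ℝ) ^ (γ + α) := pow_le_pow_right₀ (by linarith) (Nat.le_add_right _ _)
    linarith
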